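/- Let ε ∈ K satisfy ε^2 - ε + 1 = 0. Then the projectivity induced by the matrix N = [[0, 2ε-2, 2ε-4, 0],[0, -4ε+2, 0, 0],[2ε-4, 2ε-2, 0, 0],[-3, -3ε, -3ε, 4ε-2]] stabilises the quartic surface Q' = 0, where Q' = x^3y + 2x^2y^2 + xy^3 + (3/2)x^3z + 6x^2yz + (9/2)xy^2z + (1/2)y^3z + (9/2)x^2z^2 + 6xyz^2 + y^2z^2 + 3xz^3 + (1/2)yz^3 - x^2yt - xy^2t - 3x^2zt - 4xyzt - y^2zt - 3xz^2t - yz^2t. -/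

import Mathlib

/-- The quartic monoid `Q'` (the surface `Q(ε)` for `ε² - ε + 1 = 0`) as a
function of the homogeneous coordinates `(x, y, z, t) = (v 0, v 1, v 2, v 3)`. -/
def Q' {K : Type*} [Field K] (v : Fin 4 → K) : K :=
  (v 0)^3*(v 1) + 2*(v 0)^2*(v 1)^2 + (v 0)*(v 1)^3 + (3/2)*(v 0)^3*(v 2)
    + 6*(v 0)^2*(v 1)*(v 2) + (9/2)*(v 0)*(v 1)^2*(v 2) + (1/2)*(v 1)^3*(v 2)
    + (9/2)*(v 0)^2*(v 2)^2 + 6*(v 0)*(v 1)*(v 2)^2 + (v 1)^2*(v 2)^2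
    + 3*(v 0)*(v 2)^3 + (1/2)*(v 1)*(v 2)^3
    - (v 0)^2*(v 1)*(v 3) - (v 0)*(v 1)^2*(v 3) - 3*(v 0)^2*(v 2)*(v 3)
    - 4*(v 0)*(v 1)*(v 2)*(v 3) - (v 1)^2*(v 2)*(v 3) - 3*(v 0)*(v 2)^2*(v 3)
    - (v 1)*(v 2)^2*(v 3)

/-- if `ε ∈ K` satisfies `ε² - ε + 1 = 0`, the projectivity
induced by the matrix `N` stabilises the surface `Q' = 0`: `Q'` composed
with `N⁻¹` is a nonzero scalar multiple of `Q'`. -/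
theorem stmt17 {K : Type*} [Field K] [CharZero K] (ε : K)
    (hε : ε^2 - ε + 1 = 0) :
    ∃ lam : K, lam ≠ 0 ∧
      ∀ v : Fin 4 → K,
        Q' ((!![0, 2*ε - 2, 2*ε - 4, 0;
                0, -4*ε + 2, 0, 0;
                2*ε - 4, 2*ε - 2, 0, 0;
                -3, -3*ε, -3*ε, 4*ε - 2] : Matrix (Fin 4) (Fin 4) K)⁻¹.mulVec v)
          = lam * Q' v := by
  set N : Matrix (Fin 4) (Fin 4) K :=
    !![0, 2*ε - 2, 2*ε - 4, 0;
       0, -4*ε + 2, 0, 0;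
       2*ε - 4, 2*ε - 2, 0, 0;
       -3, -3*ε, -3*ε, 4*ε - 2] with hN
  have hε1 : ε ≠ 1 := by
    rintro rfl; norm_num at hε
  have hdet : N.det ≠ 0 := by
    have : N.det = 144 * (ε - 1) + 144 * (ε^2 - ε + 1) := by
      rw [hN]
      simp [Matrix.det_succ_row_zero, Fin.sum_univ_succ, Fin.succAbove]
      linear_combination (64*ε^2 - 256*ε + 64) * hε
    rw [this, hε]
    simp only [mul_zero, add_zero]
    intro h
    apply hε1
    have := mul_eq_zero.mp h
    rcases this with h1 | h2
    · norm_num at h1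
    · exact sub_eq_zero.mp h2
  have key : ∀ u : Fin 4 → K, Q' (N.mulVec u) = (-144) * Q' u := by
    intro u
    show Q' (fun i => N.mulVec u i) = (-144) * Q' u
    simp only [hN, Matrix.mulVec, dotProduct, Fin.sum_univ_four,
      Matrix.cons_val', Matrix.cons_val_zero, Matrix.cons_val_one,
      Matrix.head_cons, Matrix.empty_val', Matrix.cons_val_fin_one,
      Matrix.head_fin_const, Matrix.cons_val_two, Matrix.tail_cons,
      Matrix.cons_val_three, Matrix.of_apply, Q']
    linear_combination (((-272:K) + (176:K)*ε + (-32:K)*ε^2)*u 1*u 2^2*u 3 + ((136:K) + (-88:K)*ε + (16:K)*ε^2)*u 1*u 2^3 + ((-272:K) + (176:K)*ε + (-32:K)*ε^2)*u 1^2*u 2*u 3 + ((272:K) + (-176:K)*ε + (32:K)*ε^2)*u 1^2*u 2^2 + ((-32:K) + (96:K)*ε + (-64:K)*ε^2)*u 1^3*u 3 + ((168:K) + (-184:K)*ε + (80:K)*ε^2)*u 1^3*u 2 + ((24:K) + (-72:K)*ε + (48:K)*ε^2)*u 1^4 + ((-816:K) + (528:K)*ε + (-96:K)*ε^2)*u 0*u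 2^2*u 3 + ((816:K) + (-528:K)*ε + (96:K)*ε^2)*u 0*u 2^3 + ((-1088:K) + (704:K)*ε + (-128:K)*ε^2)*u 0*u 1*u 2*u 3 + ((1632:K) + (-1056:K)*ε + (192:K)*ε^2)*u 0*u 1*u 2^2 + ((-272:K) + (176:K)*ε + (-32:K)*ε^2)*u 0*u 1^2*u 3 + ((1224:K) + (-792:K)*ε + (144:K)*ε^2)*u 0*u 1^2*u 2 + ((288:K) + (-224:K)*ε + (64:K)*ε^2)*u 0*u 1^3 + ((-816:K) + (528:K)*ε + (-96:K)*ε^2)*u 0^2*u 2*u 3 + ((1224:K) + (-792:K)*ε + (144:K)*ε^2)*u 0^2*u 2^2 + ((-272:K) + (176:K)*ε + (-32:K)*ε^2)*u 0^2*u 1*u 3 + ((1632:K) + (-1056:K)*ε + (192:K)*ε^2)*u 0^2*u 1*u 2 + ((544:K) + (-352:K)*ε + (64:K)*ε^2)*u 0^2*u 1^2 + ((408:K) + (-264:K)*ε + (48:K)*ε^2)*u 0^3*u 2 + ((272:K) + (-176:K)*ε + (32:K)*ε^2)*u 0^3*u 1) * hε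
  refine ⟨-1/144, by norm_num, fun v => ?_⟩
  have hv : N.mulVec (N⁻¹.mulVec v) = v := by
    rw [Matrix.mulVec_mulVec, Matrix.mul_nonsing_inv _ (isUnit_iff_ne_zero.mpr hdet), Matrix.one_mulVec]
  have := key (N⁻¹.mulVec v)
  rw [hv] at this
  linear_combination (1/144 : K) * this
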